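/- arXiv:1601.06336 — 2 statements merged into one kernel-verified Lean document; each statement's English description precedes it below -/
import Mathlib

section
/- Let 𝔽 be ℝ or ℂ, X a Banach space over 𝔽 with dim X ≥ 2, and 𝒜 a standard operator algebra in B(X). Define 𝒩₂(𝒜) = {N ∈ 𝒜 : N² = 0}. If Φ : 𝒜 → 𝒜 is a surjective strong 3-commutativity preserving map, then Φ maps the set 𝔽I + 𝒩₂(𝒜) = {λI + N : λ ∈ 𝔽, N ∈ 𝒩₂(𝒜)} onto itself. -/
set_option synthInstance.maxHeartbeats 400000
set_option maxHeartbeats 1000000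

/-- The commutator `[A,B] = AB - BA` in a ring. -/
def bracket1 {R : Type*} [Ring R] (A B : R) : R := A * B - B * A

/-- The 3-commutator `[A,B]₃ = [[[A,B],B],B]` in a ring. -/
def bracket3 {R : Type*} [Ring R] (A B : R) : R := bracket1 (bracket1 (bracket1 A B) B) B

section RingLemmas

variable {𝕜 R : Type*} [CommRing 𝕜] [Ring R] [Algebra 𝕜 R]

lemma map_bracket3 {S F : Type*} [Ring S] [FunLike F R S] [RingHomClass F R S]
    (φ : F) (a b : R) : φ (bracket3 a b) = bracket3 (φ a) (φ b) := by
  simp [bracket3, bracket1, map_sub, map_mul]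

lemma bracket3_expand (B A : R) :
    bracket3 B A = B*A*A*A - (3:𝕜) • (A*B*A*A) + (3:𝕜) • (A*A*B*A) - A*A*A*B := by
  have h3 : ((3:ℕ):𝕜) = (3:𝕜) := by norm_num
  rw [← h3, Nat.cast_smul_eq_nsmul, Nat.cast_smul_eq_nsmul]
  simp only [bracket3, bracket1]
  noncomm_ring

lemma bracket1_shift (B N : R) (l : 𝕜) : bracket1 B (l • 1 + N) = bracket1 B N := by
  simp only [bracket1, mul_add, add_mul, mul_smul_comm, smul_mul_assoc, mul_one, one_mul]
  abel

lemma bracket3_shift (B N : R) (l : 𝕜) : bracket3 B (l • 1 + N) = bracket3 B N := by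
  simp only [bracket3, bracket1_shift]

lemma bracket3_sq_zero (B N : R) (l : 𝕜) (h : N * N = 0) :
    bracket3 B (l • (1:R) + N) = 0 := by
  rw [bracket3_shift, bracket3_expand (𝕜 := 𝕜)]
  have e1 : B*N*N*N = 0 := by rw [mul_assoc (B*N) N N, h, mul_zero]
  have e2 : N*B*N*N = 0 := by rw [mul_assoc (N*B) N N, h, mul_zero]
  have e3 : N*N*B*N = 0 := by rw [h, zero_mul, zero_mul]
  have e4 : N*N*N*B = 0 := by rw [h, zero_mul, zero_mul]
  rw [e1, e2, e3, e4]
  simp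

end RingLemmas

/-- A standard operator algebra on a normed space `X` over `𝕜` is a subalgebra of
`B(X)` (automatically containing the identity) containing all finite-rank operators. -/
def IsStandardOperatorAlgebra (𝕜 : Type*) [RCLike 𝕜] (X : Type*)
    [NormedAddCommGroup X] [NormedSpace 𝕜 X]
    (𝒜 : Subalgebra 𝕜 (X →L[𝕜] X)) : Prop :=
  ∀ T : X →L[𝕜] X, FiniteDimensional 𝕜 (LinearMap.range (T : X →ₗ[𝕜] X)) → T ∈ 𝒜


section Analytic

variable {𝕜 X : Type*} [RCLike 𝕜] [NormedAddCommGroup X] [NormedSpace 𝕜 X]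

/-- Continuous dual family with prescribed values on a linearly independent family. -/
lemma exists_dual_family {n : ℕ} {v : Fin n → X} (hv : LinearIndependent 𝕜 v)
    (c : Fin n → 𝕜) : ∃ f : X →L[𝕜] 𝕜, ∀ i, f (v i) = c i := by
  set W : Submodule 𝕜 X := Submodule.span 𝕜 (Set.range v) with hW
  haveI : FiniteDimensional 𝕜 W :=
    FiniteDimensional.span_of_finite 𝕜 (Set.finite_range v)
  let b : Module.Basis (Fin n) 𝕜 W := Module.Basis.span hv
  let g0 : W →ₗ[𝕜] 𝕜 := b.constr 𝕜 c
  let g : W →L[𝕜] 𝕜 := ⟨g0, g0.continuous_of_finiteDimensional⟩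
  obtain ⟨f, hf, -⟩ := exists_extension_norm_eq W g
  refine ⟨f, fun i => ?_⟩
  have hm : v i ∈ W := Submodule.subset_span (Set.mem_range_self i)
  have hbi : (⟨v i, hm⟩ : W) = b i := (Module.Basis.span_apply hv i).symm
  have := hf ⟨v i, hm⟩
  rw [hbi] at this
  have hv2 : ((b i : W) : X) = v i := congrArg Subtype.val (Module.Basis.span_apply hv i)
  rw [hv2] at this
  rw [this]
  simp [g, g0, Module.Basis.constr_basis]

lemma rankOne_mem {𝒜 : Subalgebra 𝕜 (X →L[𝕜] X)}
    (h𝒜 : IsStandardOperatorAlgebra 𝕜 X 𝒜) (f : X →L[𝕜] 𝕜) (v : X) :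
    f.smulRight v ∈ 𝒜 := by
  apply h𝒜
  have hle : LinearMap.range ((f.smulRight v : X →L[𝕜] X) : X →ₗ[𝕜] X) ≤ 𝕜 ∙ v := by
    rintro x hx
    obtain ⟨w, rfl⟩ := hx
    simp only [ContinuousLinearMap.coe_coe, ContinuousLinearMap.smulRight_apply]
    exact Submodule.smul_mem _ _ (Submodule.mem_span_singleton_self v)
  exact Submodule.finiteDimensional_of_le hle

/-- Locally scalar implies scalar. -/
lemma scalar_of_local (T : X →L[𝕜] X) (x₀ : X) (hx₀ : x₀ ≠ 0)
    (h : ∀ v : X, ∃ μ : 𝕜, T v = μ • v) : ∃ μ : 𝕜, ∀ v : X, T v = μ • v := by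
  obtain ⟨μ, hμ⟩ := h x₀
  refine ⟨μ, fun v => ?_⟩
  rcases eq_or_ne v 0 with rfl | hv
  · simp
  by_cases hli : LinearIndependent 𝕜 ![x₀, v]
  · obtain ⟨ν, hν⟩ := h v
    obtain ⟨ρ, hρ⟩ := h (x₀ + v)
    have hkey : (μ - ρ) • x₀ + (ν - ρ) • v = 0 := by
      have h1 : μ • x₀ + ν • v = ρ • x₀ + ρ • v := by
        rw [← hμ, ← hν, ← map_add, hρ, smul_add]
      rw [sub_smul, sub_smul, sub_add_sub_comm, h1, sub_self]
    obtain ⟨h1, h2⟩ := hli.eq_zero_of_pair hkey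
    have hνμ : ν = μ := by
      have e1 : μ = ρ := sub_eq_zero.mp h1
      have e2 : ν = ρ := sub_eq_zero.mp h2
      rw [e1, e2]
    rw [hν, hνμ]
  · have h2 : ¬ ∀ a : 𝕜, a • x₀ ≠ v := fun hall =>
      hli ((LinearIndependent.pair_iff' hx₀).2 hall)
    push_neg at h2
    obtain ⟨a, ha⟩ := h2
    have ha' : a ≠ 0 := by rintro rfl; simp at ha; exact hv ha.symm
    rw [← ha, map_smul, hμ, smul_comm]

end Analytic

section Hard

variable {𝕜 X : Type*} [RCLike 𝕜] [NormedAddCommGroup X] [NormedSpace 𝕜 X]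

set_option maxHeartbeats 4000000 in
set_option synthInstance.maxHeartbeats 1000000 in
lemma hard (hdim : 2 ≤ Module.rank 𝕜 X) {𝒜 : Subalgebra 𝕜 (X →L[𝕜] X)}
    (h𝒜 : IsStandardOperatorAlgebra 𝕜 X 𝒜) (A : 𝒜)
    (hA : ∀ B : 𝒜, bracket3 B A = 0) :
    ∃ (l : 𝕜) (N : 𝒜), N * N = 0 ∧ A = l • (1 : 𝒜) + N := by
  set T : X →L[𝕜] X := (A : X →L[𝕜] X) with hT
  have star : ∀ (f : X →L[𝕜] 𝕜) (v w : X),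
      f (T (T (T w))) • v - (3:𝕜) • (f (T (T w)) • T v)
        + (3:𝕜) • (f (T w) • T (T v)) - f w • T (T (T v)) = 0 := by
    intro f v w
    have hB : (f.smulRight v) ∈ 𝒜 := rankOne_mem h𝒜 f v
    have h0 := hA ⟨f.smulRight v, hB⟩
    have h1 : bracket3 (f.smulRight v) T = 0 := by
      have h2 := congrArg (𝒜.val) h0
      rw [map_bracket3] at h2
      simpa using h2
    rw [bracket3_expand (𝕜 := 𝕜)] at h1
    have h2 := ContinuousLinearMap.ext_iff.1 h1 w
    simpa [ContinuousLinearMap.mul_apply, ContinuousLinearMap.smulRight_apply,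
      map_smul, smul_smul] using h2
  have h3ne : (3:𝕜) ≠ 0 := by norm_num
  by_cases hz : ∃ z : X, LinearIndependent 𝕜 ![z, T z]
  · obtain ⟨z, hzli⟩ := hz
    have hz0 : z ≠ 0 := by
      have := hzli.ne_zero 0
      simpa using this
    -- Step A : T (T z) ∈ span {z, T z}
    have hmem : T (T z) ∈ Submodule.span 𝕜 {z, T z} := by
      by_contra hno
      have hrange : Set.range ![z, T z] = {z, T z} := by
        ext x
        simp only [Set.mem_range, Fin.exists_fin_two, Matrix.cons_val_zero,
          Matrix.cons_val_one, Matrix.head_cons, Set.mem_insert_iff, Set.mem_singleton_iff]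
        tauto
      have htri : LinearIndependent 𝕜 ![z, T z, T (T z)] := by
        have heq : ![z, T z, T (T z)] = Fin.snoc ![z, T z] (T (T z)) := by
          funext i
          fin_cases i <;> rfl
        rw [heq, linearIndependent_fin_snoc]
        exact ⟨hzli, by rwa [hrange]⟩
      obtain ⟨f, hf⟩ := exists_dual_family htri ![0, 1, 0]
      have hf0 : f z = 0 := by simpa using hf 0
      have hf1 : f (T z) = 1 := by simpa using hf 1
      have hf2 : f (T (T z)) = 0 := by simpa using hf 2
      have hstar := star f z z
      rw [hf0, hf1, hf2] at hstar
      have key : T (T z) - (-( (3:𝕜)⁻¹ * f (T (T (T z))))) • z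
          = (3:𝕜)⁻¹ • (f (T (T (T z))) • z - (3:𝕜) • ((0:𝕜) • T z)
            + (3:𝕜) • ((1:𝕜) • T (T z)) - (0:𝕜) • T (T (T z))) := by
        match_scalars <;> field_simp <;> ring
      rw [hstar, smul_zero, sub_eq_zero] at key
      apply hno
      rw [key]
      exact Submodule.smul_mem _ _ (Submodule.subset_span (by simp))
    obtain ⟨b, a, hab⟩ := Submodule.mem_span_pair.1 hmem
    obtain ⟨g, hg⟩ := exists_dual_family hzli ![0, 1]
    have hgz : g z = 0 := by simpa using hg 0
    have hgTz : g (T z) = 1 := by simpa using hg 1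
    have hgT2 : g (T (T z)) = a := by rw [← hab]; simp [hgz, hgTz]
    have hT3 : T (T (T z)) = b • T z + a • T (T z) := by
      conv_lhs => rw [← hab]
      simp [map_add, map_smul]
    have hgT3 : g (T (T (T z))) = a * a + b := by
      rw [hT3]; simp [hgTz, hgT2]; ring
    -- global quadratic
    have hquad : ∀ v : X, T (T v) = a • T v + (-((3:𝕜)⁻¹ * (a * a + b))) • v := by
      intro v
      have hstar := star g v z
      rw [hgz, hgTz, hgT2, hgT3] at hstar
      have key : T (T v) - (a • T v + (-((3:𝕜)⁻¹ * (a * a + b))) • v)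
          = (3:𝕜)⁻¹ • ((a * a + b) • v - (3:𝕜) • (a • T v)
            + (3:𝕜) • ((1:𝕜) • T (T v)) - (0:𝕜) • T (T (T v))) := by
        match_scalars <;> field_simp <;> ring
      rw [hstar, smul_zero, sub_eq_zero] at key
      exact key
    set c : 𝕜 := -((3:𝕜)⁻¹ * (a * a + b)) with hc
    have hAq : A * A = a • A + c • (1 : 𝒜) := by
      apply Subtype.ext
      ext v
      have : ((A * A : 𝒜) : X →L[𝕜] X) v = T (T v) := by
        simp [MulMemClass.coe_mul, ContinuousLinearMap.mul_apply, hT]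
      rw [this, hquad v]
      simp [ContinuousLinearMap.smul_apply, ContinuousLinearMap.one_apply, hc]
      rfl
    set N : 𝒜 := A - (a / 2) • 1 with hNdef
    set d : 𝕜 := c + a * a / 4 with hd
    have hN2 : N * N = d • (1 : 𝒜) := by
      have expand : N * N = A * A - a • A + (a * a / 4) • 1 := by
        rw [hNdef]
        simp only [sub_mul, mul_sub, smul_mul_assoc, mul_smul_comm, one_mul, mul_one,
          smul_smul]
        module
      rw [expand, hAq, hd]
      module
    rcases eq_or_ne d 0 with hd0 | hd0
    · exact ⟨a / 2, N, by rw [hN2, hd0, zero_smul], by rw [hNdef]; abel⟩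
    · exfalso
      have hA' : A = (a / 2) • 1 + N := by rw [hNdef]; abel
      have hcomm : ∀ B : 𝒜, B * N = N * B := by
        intro B
        have h0 : bracket3 B N = 0 := by
          have := hA B
          rwa [hA', bracket3_shift] at this
        have e1 : B*N*N*N = d • (B*N) := by
          rw [mul_assoc (B*N) N N, hN2, mul_smul_comm, mul_one]
        have e2 : N*B*N*N = d • (N*B) := by
          rw [mul_assoc (N*B) N N, hN2, mul_smul_comm, mul_one]
        have e3 : N*N*B*N = d • (B*N) := by
          rw [hN2, smul_mul_assoc, smul_mul_assoc, one_mul]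
        have e4 : N*N*N*B = d • (N*B) := by
          rw [hN2, smul_mul_assoc, smul_mul_assoc, one_mul]
        rw [bracket3_expand (𝕜 := 𝕜), e1, e2, e3, e4] at h0
        have h4 : ((4:𝕜) * d) • (B * N - N * B) = 0 := by
          rw [← h0]
          module
        have h4d : (4:𝕜) * d ≠ 0 := by
          have : (4:𝕜) ≠ 0 := by norm_num
          exact mul_ne_zero this hd0
        have h5 := (smul_eq_zero.1 h4).resolve_left h4d
        exact sub_eq_zero.1 h5
      -- N is locally scalar, hence scalar, contradicting independence of z, T z
      set N' : X →L[𝕜] X := (N : X →L[𝕜] X) with hN'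
      have hNloc : ∀ v : X, ∃ μ : 𝕜, N' v = μ • v := by
        intro v
        rcases eq_or_ne v 0 with rfl | hv0
        · exact ⟨0, by simp⟩
        have hone : LinearIndependent 𝕜 ![v] :=
          linearIndependent_unique_iff.2 (by simpa using hv0)
        obtain ⟨f, hf⟩ := exists_dual_family hone ![1]
        have hfv : f v = 1 := by simpa using hf 0
        have hcB := hcomm ⟨f.smulRight v, rankOne_mem h𝒜 f v⟩
        have hcB' := congrArg (𝒜.val) hcB
        rw [map_mul, map_mul] at hcB'
        have h6 := ContinuousLinearMap.ext_iff.1 hcB' v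
        simp only [Subalgebra.coe_val, ContinuousLinearMap.mul_apply,
          ContinuousLinearMap.smulRight_apply, hfv, one_smul, map_smul] at h6
        exact ⟨f (N' v), h6.symm⟩
      obtain ⟨μ, hμ⟩ := scalar_of_local N' z hz0 hNloc
      have hcoe : N' = T - (a/2) • 1 := by
        rw [hN', hNdef]
        push_cast
        rfl
      have hTzeq : (μ + a/2) • z = T z := by
        have h7 : N' z = T z - (a/2) • z := by
          rw [hcoe]
          simp
        rw [hμ z] at h7
        rw [add_smul]
        exact eq_sub_iff_add_eq.1 h7
      exact (LinearIndependent.pair_iff' hz0).1 hzli (μ + a/2) hTzeq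
  · -- degenerate case: T is locally scalar
    have hloc : ∀ v : X, ∃ μ : 𝕜, T v = μ • v := by
      intro v
      rcases eq_or_ne v 0 with rfl | hv0
      · exact ⟨0, by simp⟩
      have h2 : ¬ ∀ a : 𝕜, a • v ≠ T v := fun hall =>
        hz ⟨v, (LinearIndependent.pair_iff' hv0).2 hall⟩
      push_neg at h2
      obtain ⟨a, ha⟩ := h2
      exact ⟨a, ha.symm⟩
    have hpos : (0:Cardinal) < Module.rank 𝕜 X := lt_of_lt_of_le (by norm_num) hdim
    obtain ⟨x₀, hx₀⟩ := rank_pos_iff_exists_ne_zero.1 hpos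
    obtain ⟨μ, hμ⟩ := scalar_of_local T x₀ hx₀ hloc
    refine ⟨μ, 0, by simp, ?_⟩
    apply Subtype.ext
    ext v
    simp [hμ v, hT]
    exact hμ v

end Hard

theorem stmt_10 {𝕜 X : Type*} [RCLike 𝕜] [NormedAddCommGroup X] [NormedSpace 𝕜 X]
    [CompleteSpace X] (hdim : 2 ≤ Module.rank 𝕜 X)
    (𝒜 : Subalgebra 𝕜 (X →L[𝕜] X)) (h𝒜 : IsStandardOperatorAlgebra 𝕜 X 𝒜)
    (Φ : 𝒜 → 𝒜) (hsurj : Function.Surjective Φ)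
    (hpres : ∀ A B : 𝒜, bracket3 (Φ A) (Φ B) = bracket3 A B) :
    Φ '' {A : 𝒜 | ∃ (l : 𝕜) (N : 𝒜), N * N = 0 ∧ A = l • (1 : 𝒜) + N} =
      {A : 𝒜 | ∃ (l : 𝕜) (N : 𝒜), N * N = 0 ∧ A = l • (1 : 𝒜) + N} := by
  have hset : {A : 𝒜 | ∃ (l : 𝕜) (N : 𝒜), N * N = 0 ∧ A = l • (1 : 𝒜) + N} =
      {A : 𝒜 | ∀ B : 𝒜, bracket3 B A = 0} := by
    ext A
    constructor
    · rintro ⟨l, N, hN, rfl⟩ B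
      exact bracket3_sq_zero B N l hN
    · intro h
      exact hard hdim h𝒜 A h
  rw [hset]
  ext C
  constructor
  · rintro ⟨A, hA, rfl⟩ B'
    obtain ⟨B, rfl⟩ := hsurj B'
    rw [hpres]
    exact hA B
  · intro hC
    obtain ⟨A, rfl⟩ := hsurj C
    exact ⟨A, fun B => by rw [← hpres]; exact hC (Φ B), rfl⟩
end

section
/- Let 𝔽 be ℝ or ℂ, X a Banach space over 𝔽 with dim X ≥ 2, and 𝒜 a standard operator algebra in B(X). Let Φ : 𝒜 → 𝒜 be a surjective strong 3-commutativity preserving map and P ∈ 𝒜 a nontrivial idempotent (P² = P, P ≠ 0, P ≠ I). Then for every A ∈ 𝒜, P·[A, Φ(P)]₃·P = 0 and (I − P)·[A, Φ(P)]₃·(I − P) = 0. -/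
set_option synthInstance.maxHeartbeats 400000
set_option maxHeartbeats 1000000

lemma bracket3_idem {R : Type*} [Ring R] (b p : R) (hp : p * p = p) :
    bracket3 b p = b * p - p * b := by
  have h2 : ∀ x : R, p * (p * x) = p * x := fun x => by rw [← mul_assoc, hp]
  simp only [bracket3, bracket1, sub_mul, mul_sub, mul_assoc, hp, h2]
  abel

lemma corner_zero {R : Type*} [Ring R] (b p : R) (hp : p * p = p) :
    p * (b * p - p * b) * p = 0 := by
  have h2 : ∀ x : R, p * (p * x) = p * x := fun x => by rw [← mul_assoc, hp]
  simp only [sub_mul, mul_sub, mul_assoc, hp, h2, sub_self]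

lemma corner_zero' {R : Type*} [Ring R] (b p : R) (hp : p * p = p) :
    (1 - p) * (b * p - p * b) * (1 - p) = 0 := by
  have h2 : ∀ x : R, p * (p * x) = p * x := fun x => by rw [← mul_assoc, hp]
  simp only [sub_mul, mul_sub, mul_assoc, one_mul, mul_one, hp, h2]
  abel

theorem stmt_12 {𝕜 X : Type*} [RCLike 𝕜] [NormedAddCommGroup X] [NormedSpace 𝕜 X]
    [CompleteSpace X] (hdim : 2 ≤ Module.rank 𝕜 X)
    (𝒜 : Subalgebra 𝕜 (X →L[𝕜] X)) (h𝒜 : IsStandardOperatorAlgebra 𝕜 X 𝒜)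
    (Φ : 𝒜 → 𝒜) (hsurj : Function.Surjective Φ)
    (hpres : ∀ A B : 𝒜, bracket3 (Φ A) (Φ B) = bracket3 A B)
    (P : 𝒜) (hP : P * P = P) (hP0 : P ≠ 0) (hP1 : P ≠ 1) :
    ∀ A : 𝒜, P * bracket3 A (Φ P) * P = 0 ∧
      ((1 : 𝒜) - P) * bracket3 A (Φ P) * ((1 : 𝒜) - P) = 0 := by
  intro A
  obtain ⟨B, rfl⟩ := hsurj A
  rw [hpres]
  have key : bracket3 B P = B * P - P * B := bracket3_idem B P hP
  rw [key]
  exact ⟨corner_zero B P hP, corner_zero' B P hP⟩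
end
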